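/- Suppose Ω ⊂ ℙ(ℝ^d) is a properly convex domain, 𝒞 ⊆ Ω is a closed convex subset, and a_1, …, a_m ∈ Aut(Ω). For r > 0 let M_r := {x ∈ 𝒞 : H_Ω(x, a_j x) ≤ r for all 1 ≤ j ≤ m}. Then ConvHull_Ω(M_r) ⊆ M_{2^{d−1} r}; that is, every point p of the convex hull of M_r satisfies H_Ω(p, a_j p) ≤ 2^{d−1} r for all 1 ≤ j ≤ m. -/

import Mathlib

open scoped LinearAlgebra.Projectivization Pointwise
open Projectivization Matrix

namespace CCProj

abbrev PSp (d : ℕ) := ℙ ℝ (Fin d → ℝ)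

noncomputable instance (d : ℕ) : TopologicalSpace (PSp d) :=
  inferInstanceAs (TopologicalSpace (Quotient (projectivizationSetoid ℝ (Fin d → ℝ))))

variable {d : ℕ}

noncomputable def glEquivHom (d : ℕ) :
    GL (Fin d) ℝ →* ((Fin d → ℝ) ≃ₗ[ℝ] (Fin d → ℝ)) :=
  (Matrix.GeneralLinearGroup.toLin.trans
    (LinearMap.GeneralLinearGroup.generalLinearEquiv ℝ (Fin d → ℝ))).toMonoidHom

noncomputable def projPerm (e : (Fin d → ℝ) ≃ₗ[ℝ] (Fin d → ℝ)) : Equiv.Perm (PSp d) where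
  toFun := Projectivization.map e.toLinearMap e.injective
  invFun := Projectivization.map e.symm.toLinearMap e.symm.injective
  left_inv x := by
    induction x using Projectivization.ind with
    | h v hv => simp [Projectivization.map_mk]
  right_inv x := by
    induction x using Projectivization.ind with
    | h v hv => simp [Projectivization.map_mk]

noncomputable def glToPerm (d : ℕ) : GL (Fin d) ℝ →* Equiv.Perm (PSp d) where
  toFun g := projPerm (glEquivHom d g)
  map_one' := by
    ext x
    induction x using Projectivization.ind with
    | h v hv => simp [projPerm, Projectivization.map_mk]
  map_mul' g h := by
    ext x
    induction x using Projectivization.ind with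
    | h v hv => simp [projPerm, Projectivization.map_mk]

abbrev PGL (d : ℕ) := GL (Fin d) ℝ ⧸ (glToPerm d).ker

noncomputable def pglPerm (d : ℕ) : PGL d →* Equiv.Perm (PSp d) :=
  QuotientGroup.lift _ (glToPerm d) (fun _ hg => hg)

noncomputable instance : MulAction (PGL d) (PSp d) :=
  MulAction.compHom _ (pglPerm d)

/-! ### Convexity in projective space -/

/-- The affine chart associated to a linear functional `f`: a projective point `x` with
`f(x.rep) ≠ 0` is sent to the unique representative `v` of `x` with `f v = 1`. -/
noncomputable def chartMap (f : (Fin d → ℝ) →ₗ[ℝ] ℝ) (x : PSp d) : Fin d → ℝ :=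
  (f x.rep)⁻¹ • x.rep

/-- A set `C ⊆ ℙ(ℝ^d)` is convex if it lies in some affine chart and is convex there. -/
def IsConvexSet (C : Set (PSp d)) : Prop :=
  ∃ f : (Fin d → ℝ) →ₗ[ℝ] ℝ, (∀ x ∈ C, f x.rep ≠ 0) ∧ Convex ℝ (chartMap f '' C)

/-- A set `C ⊆ ℙ(ℝ^d)` is properly convex if it lies in some affine chart and is
convex and bounded there. -/
def IsProperlyConvexSet (C : Set (PSp d)) : Prop :=
  ∃ f : (Fin d → ℝ) →ₗ[ℝ] ℝ, (∀ x ∈ C, f x.rep ≠ 0) ∧ Convex ℝ (chartMap f '' C) ∧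
    Bornology.IsBounded (chartMap f '' C)

/-- A properly convex domain: a non-empty open properly convex subset of `ℙ(ℝ^d)`. -/
def IsProperlyConvexDomain (Ω : Set (PSp d)) : Prop :=
  IsOpen Ω ∧ Ω.Nonempty ∧ IsProperlyConvexSet Ω

/-- The projectivization of a linear subspace `W ⊆ ℝ^d`, as a subset of `ℙ(ℝ^d)`. -/
def Pb (W : Submodule ℝ (Fin d → ℝ)) : Set (PSp d) := {x | x.rep ∈ W}

/-- The linear span of (the lines representing) a subset of `ℙ(ℝ^d)`. -/
def projSpan (C : Set (PSp d)) : Submodule ℝ (Fin d → ℝ) :=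
  Submodule.span ℝ {v | ∃ x ∈ C, v = Projectivization.rep x}

/-- `C` is open in its span, i.e. equal to its relative interior. -/
def OpenInSpan (C : Set (PSp d)) : Prop :=
  ∃ U : Set (PSp d), IsOpen U ∧ C = U ∩ Pb (projSpan C)

/-! ### The Hilbert metric -/

/-- The set of "cross-ratio" values used to define the Hilbert distance on a properly
convex set `C` which is open in its span: for linear functionals `f, g` which do not
vanish on (the cone over) `C`, one takes `f(ξ)g(η)/(f(η)g(ξ))` where `ξ, η` are
representatives of `x, y`.  (This quantity is independent of the choice of
representatives.)  For such a set `C`, the supremum of this set is exactly the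
cross-ratio `[a,x,y,b]` of the classical definition of the Hilbert distance, where
`a, x, y, b` are aligned in this order on the projective line through `x` and `y`,
with `a, b ∈ ∂C`. -/
def crossSet (C : Set (PSp d)) (x y : PSp d) : Set ℝ :=
  {r | ∃ f g : (Fin d → ℝ) →ₗ[ℝ] ℝ, (∀ z ∈ C, f z.rep ≠ 0) ∧ (∀ z ∈ C, g z.rep ≠ 0) ∧
      r = (f x.rep * g y.rep) / (f y.rep * g x.rep)}

/-- The Hilbert distance on a properly convex set `C ⊆ ℙ(ℝ^d)` which is open in its
span: `H_C(x,y) = (1/2) log [a,x,y,b]`. -/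
noncomputable def hilbertDist (C : Set (PSp d)) (x y : PSp d) : ℝ :=
  (1 / 2) * Real.log (sSup (crossSet C x y))

/-- The distance from a point to a set, for the Hilbert metric on `C`. -/
noncomputable def hilbertDistToSet (C : Set (PSp d)) (x : PSp d) (D : Set (PSp d)) : ℝ :=
  sInf {s | ∃ y ∈ D, s = hilbertDist C x y}

/-- The Hausdorff distance between two subsets of `C`, for the Hilbert metric on `C`. -/
noncomputable def hilbertHausDist (C : Set (PSp d)) (A B : Set (PSp d)) : ℝ :=
  max (sSup {r | ∃ a ∈ A, r = hilbertDistToSet C a B})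
      (sSup {r | ∃ b ∈ B, r = hilbertDistToSet C b A})

/-- The minimal translation length `τ_C(g) = inf_{x ∈ C} H_C(x, gx)`. -/
noncomputable def transLength (C : Set (PSp d)) (g : PGL d) : ℝ :=
  sInf ((fun x => hilbertDist C x (g • x)) '' C)

/-- The minimal translation set `Min(g) = {x ∈ Ω : H_Ω(x,gx) = τ_Ω(g)}`. -/
noncomputable def minSet (Ω : Set (PSp d)) (g : PGL d) : Set (PSp d) :=
  {x ∈ Ω | hilbertDist Ω x (g • x) = transLength Ω g}

/-! ### Automorphisms, cocompact actions -/

/-- The automorphism group `Aut(Ω) = {g ∈ PGL(d,ℝ) : gΩ = Ω}`. -/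
noncomputable def aut (Ω : Set (PSp d)) : Subgroup (PGL d) := MulAction.stabilizer (PGL d) Ω

/-- A collection `G` of elements of `PGL(d,ℝ)` acts co-compactly on `X ⊆ ℙ(ℝ^d)` if
there is a compact `K ⊆ X` with `⋃_{g ∈ G} gK = X`. -/
def ActsCocompactlyOn (G : Set (PGL d)) (X : Set (PSp d)) : Prop :=
  ∃ K : Set (PSp d), K ⊆ X ∧ IsCompact K ∧ (⋃ g ∈ G, g • K) = X

/-- A naive convex co-compact triple `(Ω, 𝒞, Λ)`. -/
structure IsNCCTriple (Ω 𝒞 : Set (PSp d)) (Λ : Subgroup (PGL d)) : Prop where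
  dom : IsProperlyConvexDomain Ω
  lambda_le : Λ ≤ aut Ω
  lambda_inf : (Λ : Set (PGL d)).Infinite
  lambda_disc : DiscreteTopology Λ
  C_nonempty : 𝒞.Nonempty
  C_sub : 𝒞 ⊆ Ω
  C_convex : IsConvexSet 𝒞
  C_closed : closure 𝒞 ∩ Ω ⊆ 𝒞   -- `𝒞` is closed in `Ω`
  C_inv : ∀ γ ∈ Λ, γ • 𝒞 = 𝒞
  C_cocompact : ActsCocompactlyOn (Λ : Set (PGL d)) 𝒞

/-! ### Segments, convex hulls and faces -/

/-- The smallest convex subset of `cl(C)` containing `X` (the convex hull of `X`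
relative to `C`). -/
def convHull (C : Set (PSp d)) (X : Set (PSp d)) : Set (PSp d) :=
  ⋂₀ {D | IsConvexSet D ∧ D ⊆ closure C ∧ X ⊆ D}

/-- The closed segment `[x,y]` joining two points of `cl(C)` inside `cl(C)`. -/
def closedSeg (C : Set (PSp d)) (x y : PSp d) : Set (PSp d) := convHull C {x, y}

/-- The open segment `(x,y) = [x,y] \ {x,y}`. -/
def openSeg (C : Set (PSp d)) (x y : PSp d) : Set (PSp d) := closedSeg C x y \ {x, y}

/-- The open segment with endpoints `[u]` and `[v]` (for `u, v` linearly independent):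
the projective points `[a•u + b•v]` with `a, b > 0`. -/
def openSegV (u v : Fin d → ℝ) : Set (PSp d) :=
  {z | ∃ a b : ℝ, 0 < a ∧ 0 < b ∧ ∃ h : a • u + b • v ≠ 0, z = Projectivization.mk ℝ (a • u + b • v) h}

/-- The projective line through `[u]` and `[v]`. -/
def projLine (u v : Fin d → ℝ) : Set (PSp d) :=
  {z | ∃ a b : ℝ, ∃ h : a • u + b • v ≠ 0, z = Projectivization.mk ℝ (a • u + b • v) h}

/-- The open face `F_Ω(x)` of a point `x ∈ cl(Ω)`. -/
def face (Ω : Set (PSp d)) (x : PSp d) : Set (PSp d) :=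
  insert x {y ∈ closure Ω | ∃ u v : Fin d → ℝ,
    openSegV u v ⊆ closure Ω ∧ x ∈ openSegV u v ∧ y ∈ openSegV u v}

/-- `A` is properly embedded in `B` if `A ⊆ B` and the inclusion is a proper map. -/
def ProperlyEmbedded (A B : Set (PSp d)) : Prop :=
  ∃ h : A ⊆ B, IsProperMap (Set.inclusion h)

/-! ### Simplices -/

/-- The standard open `(k-1)`-dimensional simplex
`{[x₁ : ⋯ : x_k : 0 : ⋯ : 0] : x₁ > 0, …, x_k > 0} ⊆ ℙ(ℝ^d)`. -/
def stdSimplex (d k : ℕ) : Set (PSp d) :=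
  {x | ∃ (v : Fin d → ℝ) (h : v ≠ 0), x = Projectivization.mk ℝ v h ∧
    ∀ i : Fin d, (((i : ℕ) < k → 0 < v i) ∧ (k ≤ (i : ℕ) → v i = 0))}

/-- The `i`-th standard basis point `[e_i] ∈ ℙ(ℝ^d)`. -/
noncomputable def basisPt (d : ℕ) (i : Fin d) : PSp d :=
  Projectivization.mk ℝ (Pi.single i 1) (by
    intro h
    have := congrFun h i
    simp at this)

/-- The absolute values of the complex eigenvalues of a real matrix. -/
noncomputable def eigAbs (M : Matrix (Fin d) (Fin d) ℝ) : Set ℝ :=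
  (fun z : ℂ => ‖z‖) '' spectrum ℂ (M.map Complex.ofReal)

/-- The operator norm on `End(ℝ^d)` associated to the standard Euclidean norm. -/
noncomputable def eucOpNorm (M : Matrix (Fin d) (Fin d) ℝ) : ℝ :=
  ‖Matrix.toEuclideanCLM (𝕜 := ℝ) M‖

/-- The image of a subset of `ℙ(ℝ^d)` under (the projectivization of) an endomorphism
`T` of `ℝ^d`. -/
def projImage (T : Matrix (Fin d) (Fin d) ℝ) (A : Set (PSp d)) : Set (PSp d) :=
  {y | ∃ (v : Fin d → ℝ) (hv : v ≠ 0), Projectivization.mk ℝ v hv ∈ A ∧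
    ∃ hTv : T *ᵥ v ≠ 0, y = Projectivization.mk ℝ (T *ᵥ v) hTv}



set_option linter.unusedSectionVars false
set_option linter.unnecessarySeqFocus false
set_option maxHeartbeats 1000000

section Cone

variable {E : Type*} [NormedAddCommGroup E] [NormedSpace ℝ E] [FiniteDimensional ℝ E]

/-- The dual cone (nonzero functionals nonnegative on `C`). -/
def dualS (C : Set E) : Set (E →ₗ[ℝ] ℝ) := {φ | (∀ w ∈ C, 0 ≤ φ w) ∧ φ ≠ 0}

/-- `sup_{φ ∈ C*} φ q / φ p`. -/
noncomputable def mRat (C : Set E) (p q : E) : ℝ :=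
  sSup ((fun φ : E →ₗ[ℝ] ℝ => φ q / φ p) '' dualS C)

variable {C : Set E}

lemma dual_pos (hopen : IsOpen C) {φ : E →ₗ[ℝ] ℝ} (hφ : φ ∈ dualS C)
    {w : E} (hw : w ∈ C) : 0 < φ w := by
  rcases hφ with ⟨hnn, hne⟩
  rcases (hnn w hw).lt_or_eq with h | h
  · exact h
  · exfalso
    apply hne
    ext u
    rcases Metric.isOpen_iff.1 hopen w hw with ⟨δ, hδ, hball⟩
    have key : ∀ t : ℝ, ‖t • u‖ < δ → 0 ≤ φ w + t * φ u := by
      intro t ht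
      have : w + t • u ∈ C := by
        apply hball
        simp [Metric.mem_ball, dist_eq_norm, ht]
      have := hnn _ this
      simpa [_root_.map_add, _root_.map_smul, smul_eq_mul] using this
    have h0 : φ u = 0 := by
      by_contra hu
      -- choose t := ± small
      set t : ℝ := δ / (2 * (‖u‖ + 1)) with ht
      have hupos : (0:ℝ) < ‖u‖ + 1 := by positivity
      have htpos : 0 < t := by positivity
      have hnorm : ∀ s : ℝ, |s| = t → ‖s • u‖ < δ := by
        intro s hs
        rw [norm_smul, Real.norm_eq_abs, hs]
        calc t * ‖u‖ < t * (2 * (‖u‖ + 1)) := by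
              apply mul_lt_mul_of_pos_left _ htpos
              nlinarith [norm_nonneg u]
          _ = δ := by rw [ht]; exact div_mul_cancel₀ _ (by positivity)
        
      have h1 := key t (hnorm t (abs_of_pos htpos))
      have h2 := key (-t) (hnorm (-t) (by rw [abs_neg, abs_of_pos htpos]))
      rw [← h] at h1 h2
      rcases lt_or_gt_of_ne hu with hlt | hlt <;> nlinarith
    simpa using h0

lemma exists_sub_smul_mem (hopen : IsOpen C) {p : E} (hp : p ∈ C) (q : E) :
    ∃ t : ℝ, 0 < t ∧ p - t • q ∈ C := by
  have hcont : Continuous (fun t : ℝ => p - t • q) := by continuity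
  have : (fun t : ℝ => p - t • q) 0 ∈ C := by simpa using hp
  have := (hcont.tendsto 0).eventually (hopen.mem_nhds this)
  rcases Metric.eventually_nhds_iff.1 this with ⟨δ, hδ, h⟩
  refine ⟨δ/2, by positivity, h ?_⟩
  simp only [Real.dist_eq, sub_zero]
  rw [abs_of_pos (by positivity)]
  linarith

lemma mRat_bddAbove (hopen : IsOpen C) {p : E} (hp : p ∈ C) (q : E) :
    BddAbove ((fun φ : E →ₗ[ℝ] ℝ => φ q / φ p) '' dualS C) := by
  rcases exists_sub_smul_mem hopen hp q with ⟨t, ht, htm⟩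
  refine ⟨1/t, ?_⟩
  rintro x ⟨φ, hφ, rfl⟩
  have hpos := dual_pos hopen hφ hp
  have h0 := hφ.1 _ htm
  rw [_root_.map_sub, _root_.map_smul, smul_eq_mul] at h0
  rw [div_le_div_iff₀ hpos ht]
  nlinarith

lemma ratio_le_mRat (hopen : IsOpen C) {p : E} (hp : p ∈ C) (q : E)
    {φ : E →ₗ[ℝ] ℝ} (hφ : φ ∈ dualS C) : φ q / φ p ≤ mRat C p q :=
  le_csSup (mRat_bddAbove hopen hp q) ⟨φ, hφ, rfl⟩

lemma dual_apply_le (hopen : IsOpen C) {p : E} (hp : p ∈ C) (q : E)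
    {φ : E →ₗ[ℝ] ℝ} (hφ : φ ∈ dualS C) : φ q ≤ mRat C p q * φ p := by
  have h := ratio_le_mRat hopen hp q hφ
  have hpos := dual_pos hopen hφ hp
  rw [div_le_iff₀ hpos] at h
  linarith

lemma mRat_pos (hopen : IsOpen C) {p q : E} (hp : p ∈ C) (hq : q ∈ C)
    {φ₀ : E →ₗ[ℝ] ℝ} (hφ₀ : φ₀ ∈ dualS C) : 0 < mRat C p q := by
  have h := ratio_le_mRat hopen hp q hφ₀
  have h1 := dual_pos hopen hφ₀ hp
  have h2 := dual_pos hopen hφ₀ hq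
  exact lt_of_lt_of_le (by positivity) h


lemma closure_smul_mem (hcone : ∀ c : ℝ, 0 < c → ∀ w ∈ C, c • w ∈ C)
    {c : ℝ} (hc : 0 < c) {a : E} (ha : a ∈ closure C) : c • a ∈ closure C := by
  have hcont : Continuous (fun w : E => c • w) := continuous_const_smul c
  exact map_mem_closure hcont ha (fun w hw => hcone c hc w hw)

lemma closure_add_mem (hconv : Convex ℝ C) (hcone : ∀ c : ℝ, 0 < c → ∀ w ∈ C, c • w ∈ C)
    {a b : E} (ha : a ∈ closure C) (hb : b ∈ closure C) : a + b ∈ closure C := by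
  have hCadd : ∀ x ∈ C, ∀ y ∈ C, x + y ∈ C := by
    intro x hx y hy
    have hmid : (1/2 : ℝ) • x + (1/2 : ℝ) • y ∈ C :=
      hconv hx hy (by norm_num) (by norm_num) (by norm_num)
    have := hcone 2 (by norm_num) _ hmid
    rw [smul_add, smul_smul, smul_smul] at this
    norm_num at this
    exact this
  have hcont : Continuous (fun p : E × E => p.1 + p.2) := continuous_add
  have key := map_mem_closure (s := C ×ˢ C) (t := C) hcont (x := (a, b)) ?_ ?_
  · exact key
  · rw [closure_prod_eq]; exact ⟨ha, hb⟩
  · rintro ⟨x, y⟩ ⟨hx, hy⟩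
    exact hCadd x hx y hy

lemma zero_mem_closure (hcone : ∀ c : ℝ, 0 < c → ∀ w ∈ C, c • w ∈ C)
    (hne : C.Nonempty) : (0 : E) ∈ closure C := by
  rcases hne with ⟨w, hw⟩
  have : Filter.Tendsto (fun n : ℕ => (1 / (n+1) : ℝ) • w) Filter.atTop (nhds 0) := by
    have h1 : Filter.Tendsto (fun n : ℕ => (1 / (n+1) : ℝ)) Filter.atTop (nhds 0) :=
      tendsto_one_div_add_atTop_nhds_zero_nat
    simpa using h1.smul_const w
  exact mem_closure_of_tendsto this (Filter.Eventually.of_forall fun n =>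
    (hcone _ (by positivity : (0:ℝ) < 1/(n+1)) w hw))

lemma mem_closure_of_dual (hconv : Convex ℝ C)
    (hcone : ∀ c : ℝ, 0 < c → ∀ w ∈ C, c • w ∈ C) (hne : C.Nonempty)
    {w : E} (hw : ∀ φ ∈ dualS C, 0 ≤ φ w) : w ∈ closure C := by
  by_contra hnot
  obtain ⟨f, u, hfu, huf⟩ :=
    geometric_hahn_banach_closed_point (hconv.closure) isClosed_closure hnot
  have hu0 : 0 < u := by
    have := hfu 0 (zero_mem_closure hcone hne)
    simpa using this
  have hfC : ∀ b ∈ C, f b ≤ 0 := by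
    intro b hb
    by_contra hfb
    push_neg at hfb
    have hc : 0 < (u + 1) / f b := by positivity
    have := hfu _ (subset_closure (hcone _ hc b hb))
    rw [_root_.map_smul, smul_eq_mul] at this
    rw [div_mul_cancel₀] at this
    · linarith
    · exact ne_of_gt hfb
  have hφ : (-f.toLinearMap) ∈ dualS C := by
    constructor
    · intro b hb
      simp only [LinearMap.neg_apply, ContinuousLinearMap.coe_coe]
      linarith [hfC b hb]
    · intro hzero
      have : (-f.toLinearMap) w = 0 := by rw [hzero]; rfl
      simp only [LinearMap.neg_apply, ContinuousLinearMap.coe_coe] at this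
      linarith
  have := hw _ hφ
  simp only [LinearMap.neg_apply, ContinuousLinearMap.coe_coe] at this
  linarith


lemma mRat_mul_le (hopen : IsOpen C)
    {p q p' q' : E} (hp : p ∈ C) (hq : q ∈ C) (hp' : p' ∈ C) (hq' : q' ∈ C)
    {φ₀ : E →ₗ[ℝ] ℝ} (hφ₀ : φ₀ ∈ dualS C) {K : ℝ} (hK : 0 < K)
    (h : ∀ φ ∈ dualS C, ∀ ψ ∈ dualS C, (φ q / φ p) * (ψ q' / ψ p') ≤ K) :
    mRat C p q * mRat C p' q' ≤ K := by
  have m1pos := mRat_pos hopen hp hq hφ₀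
  have m2pos := mRat_pos hopen hp' hq' hφ₀
  have step1 : ∀ ψ ∈ dualS C, mRat C p q ≤ K / (ψ q' / ψ p') := by
    intro ψ hψ
    have hb : 0 < ψ q' / ψ p' := by
      have := dual_pos hopen hψ hq'
      have := dual_pos hopen hψ hp'
      positivity
    apply Real.sSup_le _ (by positivity)
    rintro x ⟨φ, hφ, rfl⟩
    rw [le_div_iff₀ hb]
    exact h φ hφ ψ hψ
  have step2 : mRat C p' q' ≤ K / mRat C p q := by
    apply Real.sSup_le _ (by positivity)
    rintro x ⟨ψ, hψ, rfl⟩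
    have hb : 0 < ψ q' / ψ p' := by
      have := dual_pos hopen hψ hq'
      have := dual_pos hopen hψ hp'
      positivity
    have := step1 ψ hψ
    rw [le_div_iff₀ hb] at this
    rw [le_div_iff₀ m1pos]
    linarith [this]
  rw [le_div_iff₀ m1pos] at step2
  linarith

lemma mRat_mul_ge_one (hopen : IsOpen C) (hconv : Convex ℝ C)
    (hcone : ∀ c : ℝ, 0 < c → ∀ w ∈ C, c • w ∈ C)
    {φ₀ : E →ₗ[ℝ] ℝ} (hφ₀ : φ₀ ∈ dualS C)
    (τ τ' : E →ₗ[ℝ] E) (hττ' : ∀ w, τ (τ' w) = w)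
    (hτ : Set.MapsTo τ C C) (hτ' : Set.MapsTo τ' C C)
    {p q : E} (hp : p ∈ C) (hq : q ∈ C) :
    1 ≤ mRat C p (τ p) * mRat C q (τ' q) := by
  by_contra hcon
  push_neg at hcon
  set s := mRat C p (τ p) with hs
  set u := mRat C q (τ' q) with hu
  have hne : C.Nonempty := ⟨p, hp⟩
  have hspos : 0 < s := mRat_pos hopen hp (hτ hp) hφ₀
  have hupos : 0 < u := mRat_pos hopen hq (hτ' hq) hφ₀
  -- s•p - τ p ∈ closure C
  have hsp : s • p - τ p ∈ closure C := by
    apply mem_closure_of_dual hconv hcone hne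
    intro φ hφ
    have := dual_apply_le hopen hp (τ p) hφ
    rw [_root_.map_sub, _root_.map_smul, smul_eq_mul]
    linarith
  have huq : u • q - τ' q ∈ closure C := by
    apply mem_closure_of_dual hconv hcone hne
    intro φ hφ
    have := dual_apply_le hopen hq (τ' q) hφ
    rw [_root_.map_sub, _root_.map_smul, smul_eq_mul]
    linarith
  -- iterates as endomorphisms
  let T : Module.End ℝ E := τ
  let T' : Module.End ℝ E := τ'
  have hτcl : ∀ w ∈ closure C, τ w ∈ closure C := fun w hw =>
    map_mem_closure (LinearMap.continuous_of_finiteDimensional τ) hw (fun x hx => hτ hx)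
  have hτ'cl : ∀ w ∈ closure C, τ' w ∈ closure C := fun w hw =>
    map_mem_closure (LinearMap.continuous_of_finiteDimensional τ') hw (fun x hx => hτ' hx)
  have hTmaps : ∀ (n : ℕ) (w : E), w ∈ closure C → (T ^ n) w ∈ closure C := by
    intro n
    induction n with
    | zero => intro w hw; simpa using hw
    | succ k ih =>
      intro w hw
      rw [pow_succ]
      exact ih _ (hτcl w hw)
  have hiter1 : ∀ n : ℕ, s ^ n • p - (T ^ n) p ∈ closure C := by
    intro n
    induction n with
    | zero =>
      simp only [pow_zero, one_smul, Module.End.one_apply, sub_self]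
      exact zero_mem_closure hcone hne
    | succ k ih =>
      have hmem1 : s • (s ^ k • p - (T ^ k) p) ∈ closure C := closure_smul_mem hcone hspos ih
      have hmem2 : (T ^ k) (s • p - τ p) ∈ closure C := hTmaps k _ hsp
      have h1 : (T ^ (k+1)) p = (T ^ k) (τ p) := by rw [pow_succ]; rfl
      have key : s ^ (k+1) • p - (T ^ (k+1)) p
          = s • (s ^ k • p - (T ^ k) p) + (T ^ k) (s • p - τ p) := by
        rw [h1, _root_.map_sub, _root_.map_smul]
        match_scalars <;> ring
      rw [key]
      exact closure_add_mem hconv hcone hmem1 hmem2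
  have hT'maps : ∀ (n : ℕ) (w : E), w ∈ closure C → (T' ^ n) w ∈ closure C := by
    intro n
    induction n with
    | zero => intro w hw; simpa using hw
    | succ k ih =>
      intro w hw
      rw [pow_succ]
      exact ih _ (hτ'cl w hw)
  have hiter2 : ∀ n : ℕ, u ^ n • q - (T' ^ n) q ∈ closure C := by
    intro n
    induction n with
    | zero =>
      simp only [pow_zero, one_smul, Module.End.one_apply, sub_self]
      exact zero_mem_closure hcone hne
    | succ k ih =>
      have hmem1 : u • (u ^ k • q - (T' ^ k) q) ∈ closure C := closure_smul_mem hcone hupos ih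
      have hmem2 : (T' ^ k) (u • q - τ' q) ∈ closure C := hT'maps k _ huq
      have h1 : (T' ^ (k+1)) q = (T' ^ k) (τ' q) := by rw [pow_succ]; rfl
      have key : u ^ (k+1) • q - (T' ^ (k+1)) q
          = u • (u ^ k • q - (T' ^ k) q) + (T' ^ k) (u • q - τ' q) := by
        rw [h1, _root_.map_sub, _root_.map_smul]
        match_scalars <;> ring
      rw [key]
      exact closure_add_mem hconv hcone hmem1 hmem2
  have hTT' : ∀ (n : ℕ) (w : E), (T ^ n) ((T' ^ n) w) = w := by
    intro n
    induction n with
    | zero => intro w; simp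
    | succ k ih =>
      intro w
      rw [pow_succ T', Module.End.mul_apply, pow_succ' T, Module.End.mul_apply, ih (τ' w)]
      exact hττ' w
  have hstep2 : ∀ n : ℕ, u ^ n • (T ^ n) q - q ∈ closure C := by
    intro n
    have := hTmaps n _ (hiter2 n)
    rw [_root_.map_sub, _root_.map_smul] at this
    rw [hTT' n q] at this
    exact this
  obtain ⟨k, hk, hkm⟩ := exists_sub_smul_mem hopen hq p
  obtain ⟨l, hl, hlm⟩ := exists_sub_smul_mem hopen hp q
  obtain ⟨n, hn⟩ := exists_pow_lt_of_lt_one (show (0:ℝ) < k * l by positivity) hcon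
  have hun : (0:ℝ) < u ^ n := by positivity
  have hsn : (0:ℝ) < s ^ n := by positivity
  have hA1 : (1/l) • (s ^ n • p - (T ^ n) p) ∈ closure C :=
    closure_smul_mem hcone (by positivity) (hiter1 n)
  have hA2 : (1/l) • ((T ^ n) (p - l • q)) ∈ closure C :=
    closure_smul_mem hcone (by positivity) (hTmaps n _ (subset_closure hlm))
  have hA3 : (1/u^n) • (u ^ n • (T ^ n) q - q) ∈ closure C :=
    closure_smul_mem hcone (by positivity) (hstep2 n)
  have hA4 : (1/u^n) • (q - k • p) ∈ closure C :=
    closure_smul_mem hcone (by positivity) (subset_closure hkm)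
  have hsum : (s^n/l - k/u^n) • p
      = (1/l) • (s ^ n • p - (T ^ n) p) + (1/l) • ((T ^ n) (p - l • q))
        + (1/u^n) • (u ^ n • (T ^ n) q - q) + (1/u^n) • (q - k • p) := by
    rw [_root_.map_sub, _root_.map_smul]
    match_scalars <;> field_simp <;> ring
  have hmem : (s^n/l - k/u^n) • p ∈ closure C := by
    rw [hsum]
    exact closure_add_mem hconv hcone (closure_add_mem hconv hcone
      (closure_add_mem hconv hcone hA1 hA2) hA3) hA4
  have hneg : s^n/l - k/u^n < 0 := by
    rw [sub_neg, div_lt_div_iff₀ hl hun, ← mul_pow]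
    nlinarith [hn]
  have hφ₀cl : ∀ w ∈ closure C, 0 ≤ φ₀ w := by
    intro w hw
    have hsub : closure C ⊆ {x | 0 ≤ φ₀ x} := by
      apply closure_minimal
      · exact fun x hx => hφ₀.1 x hx
      · exact isClosed_le continuous_const (LinearMap.continuous_of_finiteDimensional φ₀)
    exact hsub hw
  have h1 := hφ₀cl _ hmem
  rw [_root_.map_smul, smul_eq_mul] at h1
  have h2 : 0 < φ₀ p := dual_pos hopen hφ₀ hp
  nlinarith


lemma sign_normalize (hconv : Convex ℝ C)
    {G : E →ₗ[ℝ] ℝ} (hG : ∀ w ∈ C, G w ≠ 0) (hne : C.Nonempty) :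
    ∃ σ : ℝ, (σ = 1 ∨ σ = -1) ∧ ∀ w ∈ C, 0 < σ * G w := by
  have hsame : ∀ (G' : E →ₗ[ℝ] ℝ), (∀ w ∈ C, G' w ≠ 0) →
      ∀ w₀ ∈ C, ∀ w ∈ C, 0 < G' w₀ → 0 < G' w := by
    intro G' hG' w₀ h₀ w hw hpos
    by_contra hle
    push_neg at hle
    have hlt : G' w < 0 := lt_of_le_of_ne hle (hG' w hw)
    have hcont : ContinuousOn (fun t : ℝ => G' ((1 - t) • w₀ + t • w)) (Set.Icc 0 1) := by
      apply Continuous.continuousOn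
      exact (LinearMap.continuous_of_finiteDimensional G').comp (by continuity)
    have hIVT := intermediate_value_Icc' (by norm_num : (0:ℝ) ≤ 1) hcont
    have hmem : (0:ℝ) ∈ Set.Icc (G' ((1-(1:ℝ)) • w₀ + (1:ℝ) • w)) (G' ((1-(0:ℝ)) • w₀ + (0:ℝ) • w)) := by
      simp only [sub_zero, one_smul, zero_smul, add_zero, sub_self, zero_add]
      exact ⟨le_of_lt hlt, le_of_lt hpos⟩
    obtain ⟨t, ht, hval⟩ := hIVT hmem
    have htm : (1 - t) • w₀ + t • w ∈ C := hconv h₀ hw (by linarith [ht.1, ht.2]) ht.1 (by ring)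
    exact hG' _ htm hval
  rcases hne with ⟨w₀, h₀⟩
  rcases (hG w₀ h₀).lt_or_gt with hneg | hpos
  · refine ⟨-1, Or.inr rfl, ?_⟩
    intro w hw
    have hGneg : ∀ v ∈ C, (-G : E →ₗ[ℝ] ℝ) v ≠ 0 := by
      intro v hv
      simp only [LinearMap.neg_apply, ne_eq, neg_eq_zero]
      exact hG v hv
    have := hsame (-G) hGneg w₀ h₀ w hw (by simp only [LinearMap.neg_apply]; linarith)
    simp only [LinearMap.neg_apply] at this
    linarith
  · exact ⟨1, Or.inl rfl, fun w hw => by simpa using hsame G hG w₀ h₀ w hw hpos⟩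

end Cone

section ProjHelpers

variable {d : ℕ}

lemma smul_ne_zero' {c : ℝ} (hc : c ≠ 0) {v : Fin d → ℝ} (hv : v ≠ 0) : c • v ≠ 0 :=
  smul_ne_zero hc hv

lemma mk_smul_eq {c : ℝ} (hc : c ≠ 0) {v : Fin d → ℝ} (hv : v ≠ 0) :
    Projectivization.mk ℝ (c • v) (smul_ne_zero hc hv) = Projectivization.mk ℝ v hv :=
  (Projectivization.mk_eq_mk_iff ℝ _ _ _ hv).mpr ⟨Units.mk0 c hc, rfl⟩

lemma exists_smul_rep {x : PSp d} {v : Fin d → ℝ} (hv : v ≠ 0)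
    (h : Projectivization.mk ℝ v hv = x) : ∃ c : ℝ, c ≠ 0 ∧ x.rep = c • v := by
  have h2 : Projectivization.mk ℝ x.rep x.rep_nonzero = Projectivization.mk ℝ v hv := by
    rw [Projectivization.mk_rep, h]
  obtain ⟨a, ha⟩ := (Projectivization.mk_eq_mk_iff ℝ _ _ _ hv).mp h2
  exact ⟨(a : ℝ), a.ne_zero, ha.symm⟩

variable (f₀ : (Fin d → ℝ) →ₗ[ℝ] ℝ)

lemma f0_chartMap {x : PSp d} (hx : f₀ x.rep ≠ 0) : f₀ (chartMap f₀ x) = 1 := by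
  unfold chartMap
  rw [_root_.map_smul, smul_eq_mul, inv_mul_cancel₀ hx]

lemma chartMap_ne_zero {x : PSp d} (hx : f₀ x.rep ≠ 0) : chartMap f₀ x ≠ 0 := by
  intro h
  have := f0_chartMap f₀ hx
  rw [h, _root_.map_zero] at this
  norm_num at this

lemma mk_chartMap {x : PSp d} (hx : f₀ x.rep ≠ 0) :
    Projectivization.mk ℝ (chartMap f₀ x) (chartMap_ne_zero f₀ hx) = x := by
  unfold chartMap
  rw [mk_smul_eq (inv_ne_zero hx) x.rep_nonzero, Projectivization.mk_rep]

lemma chartMap_eq_of_mk {x : PSp d} {v : Fin d → ℝ} (hv : v ≠ 0)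
    (h : Projectivization.mk ℝ v hv = x) (hfv : f₀ v ≠ 0) :
    chartMap f₀ x = (f₀ v)⁻¹ • v := by
  obtain ⟨c, hc, hrep⟩ := exists_smul_rep hv h
  unfold chartMap
  rw [hrep, _root_.map_smul, smul_eq_mul, mul_inv, smul_smul]
  congr 1
  field_simp

lemma cross_elem_eq {x y : PSp d} {F H : (Fin d → ℝ) →ₗ[ℝ] ℝ}
    {vx vy : Fin d → ℝ} (hvx : vx ≠ 0) (hvy : vy ≠ 0)
    (hx : Projectivization.mk ℝ vx hvx = x) (hy : Projectivization.mk ℝ vy hvy = y)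
    (hFy : F y.rep ≠ 0) (hHx : H x.rep ≠ 0) :
    (F x.rep * H y.rep) / (F y.rep * H x.rep) = (F vx * H vy) / (F vy * H vx) := by
  obtain ⟨c, hc, hcx⟩ := exists_smul_rep hvx hx
  obtain ⟨e, he, hey⟩ := exists_smul_rep hvy hy
  have hFvy : F vy ≠ 0 := by
    intro h0
    rw [hey, _root_.map_smul, smul_eq_mul, h0, mul_zero] at hFy
    exact hFy rfl
  have hHvx : H vx ≠ 0 := by
    intro h0
    rw [hcx, _root_.map_smul, smul_eq_mul, h0, mul_zero] at hHx
    exact hHx rfl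
  rw [hcx, hey]
  simp only [_root_.map_smul, smul_eq_mul]
  rw [div_eq_div_iff (by exact mul_ne_zero (by exact mul_ne_zero he hFvy) (mul_ne_zero hc hHvx))
    (mul_ne_zero hFvy hHvx)]
  ring

end ProjHelpers



section OmegaCone

variable {d : ℕ}

lemma smul_mk' (A : GL (Fin d) ℝ) (v : Fin d → ℝ) (hv : v ≠ 0) :
    (QuotientGroup.mk A : PGL d) • (Projectivization.mk ℝ v hv)
      = Projectivization.mk ℝ ((glEquivHom d A) v) ((glEquivHom d A).map_ne_zero_iff.mpr hv) := by
  show (pglPerm d (QuotientGroup.mk A)) (Projectivization.mk ℝ v hv) = _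
  rw [pglPerm, QuotientGroup.lift_mk]
  show projPerm ((glEquivHom d) A) (Projectivization.mk ℝ v hv) = _
  show Projectivization.map ((glEquivHom d) A).toLinearMap ((glEquivHom d) A).injective
    (Projectivization.mk ℝ v hv) = _
  rw [Projectivization.map_mk]
  rfl

variable (f₀ : (Fin d → ℝ) →ₗ[ℝ] ℝ) (Ω : Set (PSp d))

/-- The open cone above (the chart of) `Ω`. -/
def coneOf : Set (Fin d → ℝ) :=
  {w | 0 < f₀ w ∧ ∃ h : w ≠ 0, Projectivization.mk ℝ w h ∈ Ω}

variable {f₀ Ω}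

lemma coneOf_ne_zero {w : Fin d → ℝ} (hw : w ∈ coneOf f₀ Ω) : w ≠ 0 := hw.2.choose

lemma mk_mem_of_coneOf {w : Fin d → ℝ} (hw : w ∈ coneOf f₀ Ω) (h : w ≠ 0) :
    Projectivization.mk ℝ w h ∈ Ω := hw.2.choose_spec

lemma mem_coneOf {w : Fin d → ℝ} (h1 : 0 < f₀ w) (h : w ≠ 0)
    (h2 : Projectivization.mk ℝ w h ∈ Ω) : w ∈ coneOf f₀ Ω := ⟨h1, h, h2⟩

lemma coneOf_open (hΩo : IsOpen Ω) : IsOpen (coneOf f₀ Ω) := by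
  have h1 : IsOpen {w : Fin d → ℝ | 0 < f₀ w} :=
    isOpen_lt continuous_const (LinearMap.continuous_of_finiteDimensional f₀)
  have hq : Continuous (fun v : {v : Fin d → ℝ // v ≠ 0} =>
      (Projectivization.mk ℝ v.1 v.2 : PSp d)) := by
    exact continuous_quotient_mk'
  have h2 : IsOpen {w : Fin d → ℝ | ∃ h : w ≠ 0, Projectivization.mk ℝ w h ∈ Ω} := by
    have himg : {w : Fin d → ℝ | ∃ h : w ≠ 0, Projectivization.mk ℝ w h ∈ Ω} =
        Subtype.val '' ((fun v : {v : Fin d → ℝ // v ≠ 0} =>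
          (Projectivization.mk ℝ v.1 v.2 : PSp d)) ⁻¹' Ω) := by
      ext w
      constructor
      · rintro ⟨h, hm⟩
        exact ⟨⟨w, h⟩, hm, rfl⟩
      · rintro ⟨⟨w', h'⟩, hm, rfl⟩
        exact ⟨h', hm⟩
    rw [himg]
    exact IsOpen.isOpenMap_subtype_val (isOpen_ne : IsOpen {v : Fin d → ℝ | v ≠ 0}) _ (hq.isOpen_preimage _ hΩo)
  exact h1.inter h2

lemma chartMap_mem_coneOf (hf₀ : ∀ x ∈ Ω, f₀ x.rep ≠ 0) {x : PSp d} (hx : x ∈ Ω) :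
    chartMap f₀ x ∈ coneOf f₀ Ω := by
  refine mem_coneOf (by rw [f0_chartMap f₀ (hf₀ x hx)]; norm_num)
    (chartMap_ne_zero f₀ (hf₀ x hx)) ?_
  rw [mk_chartMap f₀ (hf₀ x hx)]
  exact hx

lemma coneOf_smul {c : ℝ} (hc : 0 < c) {w : Fin d → ℝ} (hw : w ∈ coneOf f₀ Ω) :
    c • w ∈ coneOf f₀ Ω := by
  obtain ⟨h1, h, h2⟩ := hw
  refine mem_coneOf ?_ (smul_ne_zero (ne_of_gt hc) h) ?_
  · rw [_root_.map_smul, smul_eq_mul]; positivity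
  · rw [mk_smul_eq (ne_of_gt hc) h]; exact h2

lemma coneOf_convex (hf₀ : ∀ x ∈ Ω, f₀ x.rep ≠ 0)
    (hch : Convex ℝ (chartMap f₀ '' Ω)) : Convex ℝ (coneOf f₀ Ω) := by
  intro w₁ h₁ w₂ h₂ α β hα hβ hαβ
  rcases eq_or_lt_of_le hα with hα0 | hα0
  · have hβ1 : β = 1 := by linarith
    simpa [← hα0, hβ1] using h₂
  rcases eq_or_lt_of_le hβ with hβ0 | hβ0
  · have hα1 : α = 1 := by linarith
    simpa [← hβ0, hα1] using h₁
  obtain ⟨hf1, hne1, hm1⟩ := h₁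
  obtain ⟨hf2, hne2, hm2⟩ := h₂
  set u := α • w₁ + β • w₂ with hu
  have hfu : 0 < f₀ u := by
    rw [hu, _root_.map_add, _root_.map_smul, _root_.map_smul, smul_eq_mul, smul_eq_mul]
    positivity
  have hune : u ≠ 0 := by
    intro h0
    rw [h0, _root_.map_zero] at hfu
    exact lt_irrefl 0 hfu
  refine mem_coneOf hfu hune ?_
  -- the normalised point is a convex combination of the two normalised points
  have hc1 : chartMap f₀ (Projectivization.mk ℝ w₁ hne1) = (f₀ w₁)⁻¹ • w₁ :=
    chartMap_eq_of_mk f₀ hne1 rfl (ne_of_gt hf1)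
  have hc2 : chartMap f₀ (Projectivization.mk ℝ w₂ hne2) = (f₀ w₂)⁻¹ • w₂ :=
    chartMap_eq_of_mk f₀ hne2 rfl (ne_of_gt hf2)
  have hmem1 : (f₀ w₁)⁻¹ • w₁ ∈ chartMap f₀ '' Ω := ⟨_, hm1, hc1⟩
  have hmem2 : (f₀ w₂)⁻¹ • w₂ ∈ chartMap f₀ '' Ω := ⟨_, hm2, hc2⟩
  have hcomb : (α * f₀ w₁ / f₀ u) • ((f₀ w₁)⁻¹ • w₁)
      + (β * f₀ w₂ / f₀ u) • ((f₀ w₂)⁻¹ • w₂) = (f₀ u)⁻¹ • u := by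
    rw [hu]
    match_scalars <;> (field_simp; try ring)
  have hmemu : (f₀ u)⁻¹ • u ∈ chartMap f₀ '' Ω := by
    rw [← hcomb]
    refine hch hmem1 hmem2 (by positivity) (by positivity) ?_
    have hfu' : f₀ u = α * f₀ w₁ + β * f₀ w₂ := by
      rw [hu, _root_.map_add, _root_.map_smul, _root_.map_smul]; simp [smul_eq_mul]
    rw [← add_div, hfu', div_self (by rw [← hfu']; exact ne_of_gt hfu)]
  obtain ⟨z, hz, hcz⟩ := hmemu
  have h1 : Projectivization.mk ℝ u hune
      = Projectivization.mk ℝ ((f₀ u)⁻¹ • u) (smul_ne_zero (inv_ne_zero (ne_of_gt hfu)) hune) :=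
    (mk_smul_eq (inv_ne_zero (ne_of_gt hfu)) hune).symm
  have h2 : Projectivization.mk ℝ ((f₀ u)⁻¹ • u)
      (smul_ne_zero (inv_ne_zero (ne_of_gt hfu)) hune) = z := by
    rw [← mk_chartMap f₀ (hf₀ z hz)]
    congr 1
    exact hcz.symm
  rw [h1, h2]
  exact hz

lemma dualS_rep_ne (hΩo : IsOpen Ω) (hf₀ : ∀ x ∈ Ω, f₀ x.rep ≠ 0)
    {φ : (Fin d → ℝ) →ₗ[ℝ] ℝ} (hφ : φ ∈ dualS (coneOf f₀ Ω)) :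
    ∀ z ∈ Ω, φ z.rep ≠ 0 := by
  intro z hz
  have hc : chartMap f₀ z ∈ coneOf f₀ Ω := chartMap_mem_coneOf hf₀ hz
  obtain ⟨c, hcne, hrep⟩ := exists_smul_rep (chartMap_ne_zero f₀ (hf₀ z hz))
    (mk_chartMap f₀ (hf₀ z hz))
  have hpos : 0 < φ (chartMap f₀ z) := dual_pos (coneOf_open hΩo) hφ hc
  rw [hrep, _root_.map_smul, smul_eq_mul]
  exact mul_ne_zero hcne (ne_of_gt hpos)

lemma cone_ratio_bound (hΩo : IsOpen Ω)
    {vx vy : Fin d → ℝ} (hvx : vx ∈ coneOf f₀ Ω) (hvy : vy ∈ coneOf f₀ Ω) :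
    ∃ B : ℝ, 0 < B ∧ ∀ φ ∈ dualS (coneOf f₀ Ω), φ vx / φ vy ≤ B := by
  obtain ⟨t, ht, htm⟩ := exists_sub_smul_mem (coneOf_open hΩo) hvy vx
  refine ⟨1/t, by positivity, ?_⟩
  intro φ hφ
  have h1 := hφ.1 _ htm
  rw [_root_.map_sub, _root_.map_smul, smul_eq_mul] at h1
  have h2 : 0 < φ vy := dual_pos (coneOf_open hΩo) hφ hvy
  rw [div_le_div_iff₀ h2 ht]
  nlinarith

lemma coneOf_apply_ne (hΩo : IsOpen Ω) (hf₀ : ∀ x ∈ Ω, f₀ x.rep ≠ 0)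
    {F : (Fin d → ℝ) →ₗ[ℝ] ℝ} (hFN : ∀ z ∈ Ω, F z.rep ≠ 0) :
    ∀ w ∈ coneOf f₀ Ω, F w ≠ 0 := by
  intro w hw
  have hne := coneOf_ne_zero hw
  have hm := mk_mem_of_coneOf hw hne
  obtain ⟨c, hc, hrep⟩ := exists_smul_rep hne rfl
  have := hFN _ hm
  rw [hrep, _root_.map_smul, smul_eq_mul] at this
  exact fun h0 => this (by rw [h0, mul_zero])

lemma sign_to_dualS (hΩo : IsOpen Ω) (hf₀ : ∀ x ∈ Ω, f₀ x.rep ≠ 0)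
    (hch : Convex ℝ (chartMap f₀ '' Ω)) (hne : Ω.Nonempty)
    {F : (Fin d → ℝ) →ₗ[ℝ] ℝ} (hFN : ∀ z ∈ Ω, F z.rep ≠ 0) :
    ∃ σ : ℝ, σ ≠ 0 ∧ (σ • F) ∈ dualS (coneOf f₀ Ω) := by
  obtain ⟨x₀, hx₀⟩ := hne
  have hCne : (coneOf f₀ Ω).Nonempty := ⟨_, chartMap_mem_coneOf hf₀ hx₀⟩
  obtain ⟨σ, hσ1, hσpos⟩ := sign_normalize (coneOf_convex hf₀ hch)
    (coneOf_apply_ne hΩo hf₀ hFN) hCne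
  have hσ0 : σ ≠ 0 := by rcases hσ1 with h | h <;> rw [h] <;> norm_num
  refine ⟨σ, hσ0, ?_, ?_⟩
  · intro w hw
    rw [LinearMap.smul_apply, smul_eq_mul]
    exact le_of_lt (hσpos w hw)
  · intro h0
    obtain ⟨w, hw⟩ := hCne
    have h2 := hσpos w hw
    have h3 : (σ • F) w = 0 := by rw [h0]; rfl
    rw [LinearMap.smul_apply, smul_eq_mul] at h3
    rw [h3] at h2
    exact lt_irrefl 0 h2

lemma crossSet_elem_le (hΩo : IsOpen Ω) (hf₀ : ∀ x ∈ Ω, f₀ x.rep ≠ 0)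
    (hch : Convex ℝ (chartMap f₀ '' Ω))
    {x y : PSp d} (hx : x ∈ Ω) (hy : y ∈ Ω)
    {B1 B2 : ℝ} (hB1 : ∀ φ ∈ dualS (coneOf f₀ Ω), φ (chartMap f₀ x) / φ (chartMap f₀ y) ≤ B1)
    (hB2 : ∀ φ ∈ dualS (coneOf f₀ Ω), φ (chartMap f₀ y) / φ (chartMap f₀ x) ≤ B2)
    {ρ : ℝ} (hρ : ρ ∈ crossSet Ω x y) : ρ ≤ B1 * B2 := by
  obtain ⟨F, H, hFN, hHN, rfl⟩ := hρ
  have hxC := chartMap_mem_coneOf hf₀ hx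
  have hyC := chartMap_mem_coneOf hf₀ hy
  rw [cross_elem_eq (chartMap_ne_zero f₀ (hf₀ x hx)) (chartMap_ne_zero f₀ (hf₀ y hy))
    (mk_chartMap f₀ (hf₀ x hx)) (mk_chartMap f₀ (hf₀ y hy)) (hFN y hy) (hHN x hx)]
  obtain ⟨σF, hσF, hF'⟩ := sign_to_dualS hΩo hf₀ hch ⟨x, hx⟩ hFN
  obtain ⟨σH, hσH, hH'⟩ := sign_to_dualS hΩo hf₀ hch ⟨x, hx⟩ hHN
  set vx := chartMap f₀ x with hvx
  set vy := chartMap f₀ y with hvy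
  have hFvy : 0 < (σF • F) vy := dual_pos (coneOf_open hΩo) hF' hyC
  have hFvx : 0 < (σF • F) vx := dual_pos (coneOf_open hΩo) hF' hxC
  have hHvy : 0 < (σH • H) vy := dual_pos (coneOf_open hΩo) hH' hyC
  have hHvx : 0 < (σH • H) vx := dual_pos (coneOf_open hΩo) hH' hxC
  simp only [LinearMap.smul_apply, smul_eq_mul] at hFvy hFvx hHvy hHvx
  have hFvy0 : F vy ≠ 0 := fun h0 => by rw [h0, mul_zero] at hFvy; exact lt_irrefl 0 hFvy
  have hHvx0 : H vx ≠ 0 := fun h0 => by rw [h0, mul_zero] at hHvx; exact lt_irrefl 0 hHvx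
  have heq : (F vx * H vy) / (F vy * H vx)
      = ((σF • F) vx / (σF • F) vy) * ((σH • H) vy / (σH • H) vx) := by
    simp only [LinearMap.smul_apply, smul_eq_mul]
    rw [div_mul_div_comm, div_eq_div_iff (mul_ne_zero hFvy0 hHvx0)
      (mul_ne_zero (ne_of_gt (by nlinarith : (0:ℝ) < σF * F vy)) (ne_of_gt hHvx))]
    ring
  rw [heq]
  have h1 := hB1 _ hF'
  have h2 := hB2 _ hH'
  have hp1 : 0 < (σF • F) vx / (σF • F) vy := by
    simp only [LinearMap.smul_apply, smul_eq_mul]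
    positivity
  have hp2 : 0 < (σH • H) vy / (σH • H) vx := by
    simp only [LinearMap.smul_apply, smul_eq_mul]
    positivity
  calc ((σF • F) vx / (σF • F) vy) * ((σH • H) vy / (σH • H) vx)
      ≤ B1 * ((σH • H) vy / (σH • H) vx) := by
        apply mul_le_mul_of_nonneg_right h1 (le_of_lt hp2)
    _ ≤ B1 * B2 := by
        apply mul_le_mul_of_nonneg_left h2
        linarith [lt_of_lt_of_le hp1 h1]

lemma crossSet_bddAbove (hΩo : IsOpen Ω) (hf₀ : ∀ x ∈ Ω, f₀ x.rep ≠ 0)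
    (hch : Convex ℝ (chartMap f₀ '' Ω))
    {x y : PSp d} (hx : x ∈ Ω) (hy : y ∈ Ω) : BddAbove (crossSet Ω x y) := by
  obtain ⟨B1, hB1pos, hB1⟩ := cone_ratio_bound hΩo (chartMap_mem_coneOf hf₀ hx)
    (chartMap_mem_coneOf hf₀ hy)
  obtain ⟨B2, hB2pos, hB2⟩ := cone_ratio_bound hΩo (chartMap_mem_coneOf hf₀ hy)
    (chartMap_mem_coneOf hf₀ hx)
  exact ⟨B1 * B2, fun ρ hρ => crossSet_elem_le hΩo hf₀ hch hx hy hB1 hB2 hρ⟩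

lemma one_mem_crossSet (hf₀ : ∀ x ∈ Ω, f₀ x.rep ≠ 0)
    {x y : PSp d} (hx : x ∈ Ω) (hy : y ∈ Ω) : (1:ℝ) ∈ crossSet Ω x y := by
  refine ⟨f₀, f₀, hf₀, hf₀, ?_⟩
  rw [mul_comm (f₀ y.rep) (f₀ x.rep), div_self (mul_ne_zero (hf₀ x hx) (hf₀ y hy))]

lemma crossSet_le_exp (hΩo : IsOpen Ω) (hf₀ : ∀ x ∈ Ω, f₀ x.rep ≠ 0)
    (hch : Convex ℝ (chartMap f₀ '' Ω))
    {x y : PSp d} (hx : x ∈ Ω) (hy : y ∈ Ω) {s : ℝ} (hs : hilbertDist Ω x y ≤ s) :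
    ∀ ρ ∈ crossSet Ω x y, ρ ≤ Real.exp (2 * s) := by
  have hbdd := crossSet_bddAbove hΩo hf₀ hch hx hy
  have h1 : (1:ℝ) ≤ sSup (crossSet Ω x y) := le_csSup hbdd (one_mem_crossSet hf₀ hx hy)
  have hpos : 0 < sSup (crossSet Ω x y) := lt_of_lt_of_le one_pos h1
  unfold hilbertDist at hs
  have hlog : Real.log (sSup (crossSet Ω x y)) ≤ 2 * s := by linarith
  have hsup_le : sSup (crossSet Ω x y) ≤ Real.exp (2 * s) := by
    rw [← Real.exp_log hpos]
    exact Real.exp_le_exp.mpr hlog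
  exact fun ρ hρ => le_trans (le_csSup hbdd hρ) hsup_le

end OmegaCone


/-- **Lemma 7.8**: with `M_r = {x ∈ 𝒞 : H_Ω(x, a_j x) ≤ r for all j}` for
`a_1, …, a_m ∈ Aut(Ω)` and `𝒞 ⊆ Ω` a closed convex subset, the convex hull of `M_r`
in `Ω` is contained in `M_{2^{d-1} r}`. -/
theorem convHull_Mr_subset {d : ℕ} (Ω 𝒞 : Set (PSp d))
    (hΩ : IsProperlyConvexDomain Ω)
    (h𝒞Ω : 𝒞 ⊆ Ω) (h𝒞conv : IsConvexSet 𝒞) (h𝒞cl : closure 𝒞 ∩ Ω ⊆ 𝒞)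
    (m : ℕ) (a : Fin m → PGL d) (ha : ∀ j, a j ∈ aut Ω) (r : ℝ) (hr : 0 < r) :
    convHull Ω {x ∈ 𝒞 | ∀ j, hilbertDist Ω x (a j • x) ≤ r}
      ⊆ {x ∈ 𝒞 | ∀ j, hilbertDist Ω x (a j • x) ≤ 2 ^ (d - 1) * r} := by
  classical
  obtain ⟨hΩo, hΩne, f₀, hf₀, hch, hbdd⟩ := hΩ
  intro p hp
  set M : Set (PSp d) := {x ∈ 𝒞 | ∀ j, hilbertDist Ω x (a j • x) ≤ r} with hMdef
  have hpC : p ∈ 𝒞 := hp 𝒞 ⟨h𝒞conv, h𝒞Ω.trans subset_closure, fun x hx => hx.1⟩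
  have hpΩ : p ∈ Ω := h𝒞Ω hpC
  have hMΩ : M ⊆ Ω := fun x hx => h𝒞Ω hx.1
  refine ⟨hpC, fun j => ?_⟩
  -- extract p as a convex combination of points of M in the chart
  have hS1 : convexHull ℝ (chartMap f₀ '' M) ⊆ {v | f₀ v = 1} := by
    apply convexHull_min
    · rintro v ⟨z, hz, rfl⟩
      exact f0_chartMap f₀ (hf₀ z (hMΩ hz))
    · exact (convex_singleton (1:ℝ)).linear_preimage f₀
  have hS2 : convexHull ℝ (chartMap f₀ '' M) ⊆ chartMap f₀ '' Ω :=
    convexHull_min (Set.image_mono hMΩ) hch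
  have hD₀ : ∀ {x : PSp d}, chartMap f₀ x ∈ convexHull ℝ (chartMap f₀ '' M) →
      f₀ x.rep ≠ 0 ∧ x ∈ Ω := by
    intro x hx
    have hfx : f₀ x.rep ≠ 0 := by
      intro h0
      have h1 := hS1 hx
      have h2 : chartMap f₀ x = 0 := by
        unfold chartMap
        rw [h0, _root_.inv_zero, zero_smul]
      rw [h2] at h1
      simp only [Set.mem_setOf_eq, _root_.map_zero] at h1
      norm_num at h1
    refine ⟨hfx, ?_⟩
    obtain ⟨z, hz, hcz⟩ := hS2 hx
    have : x = z := by
      rw [← mk_chartMap f₀ hfx, ← mk_chartMap f₀ (hf₀ z hz)]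
      congr 1
      exact hcz.symm
    rw [this]; exact hz
  have hfam : {x : PSp d | chartMap f₀ x ∈ convexHull ℝ (chartMap f₀ '' M)}
      ∈ {D | IsConvexSet D ∧ D ⊆ closure Ω ∧ M ⊆ D} := by
    refine ⟨⟨f₀, fun x hx => (hD₀ hx).1, ?_⟩, ?_, ?_⟩
    · have himg : chartMap f₀ '' {x : PSp d | chartMap f₀ x ∈ convexHull ℝ (chartMap f₀ '' M)}
          = convexHull ℝ (chartMap f₀ '' M) := by
        apply Set.Subset.antisymm
        · rintro v ⟨x, hx, rfl⟩
          exact hx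
        · intro v hv
          have hf1 : f₀ v = 1 := hS1 hv
          have hvne : v ≠ 0 := by
            intro h0; rw [h0, _root_.map_zero] at hf1; norm_num at hf1
          have hcv : chartMap f₀ (Projectivization.mk ℝ v hvne) = v := by
            rw [chartMap_eq_of_mk f₀ hvne rfl (by rw [hf1]; norm_num), hf1]
            simp
          exact ⟨Projectivization.mk ℝ v hvne, by rw [Set.mem_setOf_eq, hcv]; exact hv, hcv⟩
      rw [himg]
      exact convex_convexHull ℝ _
    · exact fun x hx => subset_closure (hD₀ hx).2
    · intro x hx
      exact subset_convexHull ℝ _ ⟨x, hx, rfl⟩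
  have hpS : chartMap f₀ p ∈ convexHull ℝ (chartMap f₀ '' M) := hp _ hfam
  rw [convexHull_eq] at hpS
  obtain ⟨ι, t, wgt, zf, hw0, hw1, hzs, hcm⟩ := hpS
  rw [Finset.centerMass_eq_of_sum_1 t zf hw1] at hcm
  have hchoice : ∀ i : ι, ∃ x : PSp d, i ∈ t → x ∈ M ∧ chartMap f₀ x = zf i := by
    intro i
    by_cases hi : i ∈ t
    · obtain ⟨x, hx, hcx⟩ := hzs i hi
      exact ⟨x, fun _ => ⟨hx, hcx⟩⟩
    · exact ⟨p, fun h => absurd h hi⟩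
  choose xM hxMall using hchoice
  have hxM : ∀ i ∈ t, xM i ∈ M := fun i hi => (hxMall i hi).1
  have hchx : ∀ i ∈ t, chartMap f₀ (xM i) = zf i := fun i hi => (hxMall i hi).2
  have htne : t.Nonempty := Finset.nonempty_of_sum_ne_zero (by rw [hw1]; exact one_ne_zero)
  -- dimension cases
  rcases Nat.lt_or_ge d 2 with hd | hd
  · interval_cases d
    · exact absurd (funext fun i : Fin 0 => i.elim0) p.rep_nonzero
    · -- d = 1 : projective line over ℝ¹ is a single point
      have huniq : ∀ u v : PSp 1, u = v := by
        intro u v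
        have hv0 : v.rep 0 ≠ 0 := by
          intro h
          apply v.rep_nonzero
          funext i
          rw [Subsingleton.elim i 0, h]; rfl
        have hu0 : u.rep 0 ≠ 0 := by
          intro h
          apply u.rep_nonzero
          funext i
          rw [Subsingleton.elim i 0, h]; rfl
        have hc : (u.rep 0 / v.rep 0) • v.rep = u.rep := by
          funext i
          rw [Subsingleton.elim i 0]
          simp only [Pi.smul_apply, smul_eq_mul]
          field_simp
        have hcne : u.rep 0 / v.rep 0 ≠ 0 := div_ne_zero hu0 hv0
        have h1 : Projectivization.mk ℝ u.rep u.rep_nonzero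
            = Projectivization.mk ℝ v.rep v.rep_nonzero :=
          (Projectivization.mk_eq_mk_iff ℝ _ _ _ _).mpr ⟨Units.mk0 _ hcne, hc⟩
        rw [← Projectivization.mk_rep u, ← Projectivization.mk_rep v, h1]
      obtain ⟨i₀, hi₀⟩ := htne
      have h1 : p = xM i₀ := huniq _ _
      have h2 := (hxM i₀ hi₀).2 j
      rw [h1]
      simpa using h2
  · -- main case d ≥ 2
    have hCopen : IsOpen (coneOf f₀ Ω) := coneOf_open hΩo
    have hCconv : Convex ℝ (coneOf f₀ Ω) := coneOf_convex hf₀ hch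
    have hCcone : ∀ c : ℝ, 0 < c → ∀ w ∈ coneOf f₀ Ω, c • w ∈ coneOf f₀ Ω :=
      fun c hc w hw => coneOf_smul hc hw
    have hφ₀ : f₀ ∈ dualS (coneOf f₀ Ω) := by
      constructor
      · exact fun w hw => le_of_lt hw.1
      · intro h0
        have h1 := f0_chartMap f₀ (hf₀ p hpΩ)
        rw [h0] at h1
        simp only [LinearMap.zero_apply] at h1
        norm_num at h1
    -- lift of `a j` to a linear automorphism
    obtain ⟨A, hA⟩ := QuotientGroup.mk_surjective (a j)
    set e := glEquivHom d A with he
    have hgsmul : ∀ (v : Fin d → ℝ) (hv : v ≠ 0),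
        a j • Projectivization.mk ℝ v hv
          = Projectivization.mk ℝ (e v) (e.map_ne_zero_iff.mpr hv) := by
      intro v hv
      rw [← hA]
      exact smul_mk' A v hv
    have hstab : a j • Ω = Ω := ha j
    have hgΩ : ∀ x ∈ Ω, a j • x ∈ Ω := by
      intro x hx
      have h1 := Set.smul_mem_smul_set (a := a j) hx
      rwa [hstab] at h1
    have hgΩ' : ∀ x : PSp d, a j • x ∈ Ω → x ∈ Ω := by
      intro x hx
      rw [← hstab] at hx
      exact Set.smul_mem_smul_set_iff.mp hx
    -- the sign of the lift
    have hG1ne : ∀ w ∈ coneOf f₀ Ω, (f₀ ∘ₗ (e.toLinearMap)) w ≠ 0 := by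
      intro w hw
      have hwne := coneOf_ne_zero hw
      have hmk := mk_mem_of_coneOf hw hwne
      have hmem : Projectivization.mk ℝ (e w) (e.map_ne_zero_iff.mpr hwne) ∈ Ω := by
        rw [← hgsmul w hwne]
        exact hgΩ _ hmk
      obtain ⟨c, hc, hrep⟩ := exists_smul_rep (e.map_ne_zero_iff.mpr hwne) rfl
      have h2 := hf₀ _ hmem
      rw [hrep, _root_.map_smul, smul_eq_mul] at h2
      rw [LinearMap.comp_apply]
      exact fun h0 => h2 (by rw [LinearEquiv.coe_toLinearMap] at h0; rw [h0, mul_zero])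
    obtain ⟨ε, hε1, hεpos⟩ := sign_normalize hCconv hG1ne ⟨_, chartMap_mem_coneOf hf₀ hpΩ⟩
    have hε0 : ε ≠ 0 := by rcases hε1 with h | h <;> rw [h] <;> norm_num
    have hε2 : ε * ε = 1 := by rcases hε1 with h | h <;> rw [h] <;> norm_num
    set τ : (Fin d → ℝ) →ₗ[ℝ] (Fin d → ℝ) := ε • e.toLinearMap with hτdef
    set τ' : (Fin d → ℝ) →ₗ[ℝ] (Fin d → ℝ) := ε • e.symm.toLinearMap with hτ'def
    have hτap : ∀ w, τ w = ε • e w := fun w => rfl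
    have hτ'ap : ∀ w, τ' w = ε • e.symm w := fun w => rfl
    have hττ' : ∀ w, τ (τ' w) = w := by
      intro w
      rw [hτ'ap, hτap, _root_.map_smul, smul_smul, hε2, one_smul, e.apply_symm_apply]
    have hτ'τ : ∀ w, τ' (τ w) = w := by
      intro w
      rw [hτap, hτ'ap, _root_.map_smul, smul_smul, hε2, one_smul, e.symm_apply_apply]
    have hεposC : ∀ w ∈ coneOf f₀ Ω, 0 < f₀ (τ w) := by
      intro w hw
      have h1 := hεpos w hw
      rw [LinearMap.comp_apply, LinearEquiv.coe_toLinearMap] at h1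
      rw [hτap, _root_.map_smul, smul_eq_mul]
      exact h1
    have hmkτ : ∀ (w : Fin d → ℝ) (hw : w ≠ 0) (hτw : τ w ≠ 0),
        Projectivization.mk ℝ (τ w) hτw = a j • Projectivization.mk ℝ w hw := by
      intro w hw hτw
      have h1 : Projectivization.mk ℝ (τ w) hτw
          = Projectivization.mk ℝ (ε • e w) (smul_ne_zero hε0 (e.map_ne_zero_iff.mpr hw)) := by
        congr 1
      rw [h1, mk_smul_eq hε0 (e.map_ne_zero_iff.mpr hw), hgsmul w hw]
    have hτC : Set.MapsTo τ (coneOf f₀ Ω) (coneOf f₀ Ω) := by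
      intro w hw
      have hpos := hεposC w hw
      have hτwne : τ w ≠ 0 := by
        intro h0
        rw [h0, _root_.map_zero] at hpos
        exact lt_irrefl 0 hpos
      refine mem_coneOf hpos hτwne ?_
      rw [hmkτ w (coneOf_ne_zero hw) hτwne]
      exact hgΩ _ (mk_mem_of_coneOf hw _)
    have hτ'C : Set.MapsTo τ' (coneOf f₀ Ω) (coneOf f₀ Ω) := by
      intro w hw
      have hwne := coneOf_ne_zero hw
      have hv1ne : e.symm w ≠ 0 := e.symm.map_ne_zero_iff.mpr hwne
      have hmkv1 : Projectivization.mk ℝ (e.symm w) hv1ne ∈ Ω := by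
        apply hgΩ'
        rw [hgsmul _ hv1ne]
        have h1 : Projectivization.mk ℝ (e (e.symm w)) (e.map_ne_zero_iff.mpr hv1ne)
            = Projectivization.mk ℝ w hwne := by
          congr 1
          exact e.apply_symm_apply w
        rw [h1]
        exact mk_mem_of_coneOf hw hwne
      have hcf : f₀ (e.symm w) ≠ 0 := by
        obtain ⟨c, hc, hrep⟩ := exists_smul_rep hv1ne rfl
        have h2 := hf₀ _ hmkv1
        rw [hrep, _root_.map_smul, smul_eq_mul] at h2
        exact fun h0 => h2 (by rw [h0, mul_zero])
      have hwwwC : chartMap f₀ (Projectivization.mk ℝ (e.symm w) hv1ne) ∈ coneOf f₀ Ω :=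
        chartMap_mem_coneOf hf₀ hmkv1
      have hwwwval : chartMap f₀ (Projectivization.mk ℝ (e.symm w) hv1ne)
          = (f₀ (e.symm w))⁻¹ • (e.symm w) := chartMap_eq_of_mk f₀ hv1ne rfl hcf
      have h3 := hεpos _ hwwwC
      rw [hwwwval, LinearMap.comp_apply, LinearEquiv.coe_toLinearMap, _root_.map_smul,
        _root_.map_smul, e.apply_symm_apply, smul_eq_mul] at h3
      -- h3 : 0 < ε * ((f₀ (e.symm w))⁻¹ * f₀ w)
      have hfw : 0 < f₀ w := hw.1
      have h7 : 0 < ε * (f₀ (e.symm w))⁻¹ := by nlinarith [h3, hfw]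
      have hc2 : 0 < (f₀ (e.symm w))^2 := by positivity
      have h6 : 0 < ε * f₀ (e.symm w) := by
        have hid : ε * f₀ (e.symm w) = (ε * (f₀ (e.symm w))⁻¹) * (f₀ (e.symm w))^2 := by
          field_simp
        rw [hid]
        exact mul_pos h7 hc2
      have hposτ' : 0 < f₀ (τ' w) := by
        rw [hτ'ap, _root_.map_smul, smul_eq_mul]
        exact h6
      have hτ'wne : τ' w ≠ 0 := by
        intro h0
        rw [h0, _root_.map_zero] at hposτ'
        exact lt_irrefl 0 hposτ'
      refine mem_coneOf hposτ' hτ'wne ?_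
      have h8 : Projectivization.mk ℝ (τ' w) hτ'wne
          = Projectivization.mk ℝ (ε • e.symm w) (smul_ne_zero hε0 hv1ne) := by
        congr 1
      rw [h8, mk_smul_eq hε0 hv1ne]
      exact hmkv1
    -- express the chart of p as a convex combination
    have hζC : chartMap f₀ p ∈ coneOf f₀ Ω := chartMap_mem_coneOf hf₀ hpΩ
    have hζsum : chartMap f₀ p = ∑ i ∈ t, wgt i • chartMap f₀ (xM i) := by
      rw [← hcm]
      exact (Finset.sum_congr rfl fun i hi => by rw [hchx i hi]).symm
    have hvC : ∀ i ∈ t, chartMap f₀ (xM i) ∈ coneOf f₀ Ω :=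
      fun i hi => chartMap_mem_coneOf hf₀ (hMΩ (hxM i hi))
    have hτζ : τ (chartMap f₀ p) = ∑ i ∈ t, wgt i • τ (chartMap f₀ (xM i)) := by
      rw [hζsum, _root_.map_sum]
      exact Finset.sum_congr rfl fun i _ => by rw [_root_.map_smul]
    have hτζC : τ (chartMap f₀ p) ∈ coneOf f₀ Ω := hτC hζC
    have hmkζ : Projectivization.mk ℝ (chartMap f₀ p) (coneOf_ne_zero hζC) = p :=
      mk_chartMap f₀ (hf₀ p hpΩ)
    have hgpΩ : a j • p ∈ Ω := hgΩ p hpΩ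
    have hmkτζ : Projectivization.mk ℝ (τ (chartMap f₀ p)) (coneOf_ne_zero hτζC) = a j • p := by
      rw [hmkτ _ (coneOf_ne_zero hζC) _, hmkζ]
    -- the elementwise crossSet bounds for the points of M
    have hcross_i : ∀ i ∈ t, ∀ φ ∈ dualS (coneOf f₀ Ω), ∀ ψ ∈ dualS (coneOf f₀ Ω),
        (φ (chartMap f₀ (xM i)) / φ (τ (chartMap f₀ (xM i))))
          * (ψ (τ (chartMap f₀ (xM i))) / ψ (chartMap f₀ (xM i))) ≤ Real.exp (2*r) := by
      intro i hi φ hφ ψ hψ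
      have hxiΩ : xM i ∈ Ω := hMΩ (hxM i hi)
      have hgxiΩ : a j • xM i ∈ Ω := hgΩ _ hxiΩ
      have hviC := hvC i hi
      have hτviC := hτC hviC
      have hmkvi : Projectivization.mk ℝ (chartMap f₀ (xM i)) (coneOf_ne_zero hviC) = xM i :=
        mk_chartMap f₀ (hf₀ _ hxiΩ)
      have hmkτvi : Projectivization.mk ℝ (τ (chartMap f₀ (xM i))) (coneOf_ne_zero hτviC)
          = a j • xM i := by
        rw [hmkτ _ (coneOf_ne_zero hviC) _, hmkvi]
      have helem : (φ (chartMap f₀ (xM i)) * ψ (τ (chartMap f₀ (xM i))))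
          / (φ (τ (chartMap f₀ (xM i))) * ψ (chartMap f₀ (xM i)))
          ∈ crossSet Ω (xM i) (a j • xM i) := by
        refine ⟨φ, ψ, dualS_rep_ne hΩo hf₀ hφ, dualS_rep_ne hΩo hf₀ hψ, ?_⟩
        exact (cross_elem_eq (coneOf_ne_zero hviC) (coneOf_ne_zero hτviC) hmkvi hmkτvi
          (dualS_rep_ne hΩo hf₀ hφ _ hgxiΩ) (dualS_rep_ne hΩo hf₀ hψ _ hxiΩ)).symm
      have hle := crossSet_le_exp hΩo hf₀ hch hxiΩ hgxiΩ ((hxM i hi).2 j) _ helem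
      rw [div_mul_div_comm]
      exact hle
    -- the key elementwise bound for p
    have hkey : ∀ ρ ∈ crossSet Ω p (a j • p), ρ ≤ Real.exp (2*r) * Real.exp (2*r) := by
      rintro ρ ⟨F, H, hFN, hHN, rfl⟩
      rw [cross_elem_eq (coneOf_ne_zero hζC) (coneOf_ne_zero hτζC) hmkζ hmkτζ
        (hFN _ hgpΩ) (hHN _ hpΩ)]
      obtain ⟨σF, hσF0, hF'⟩ := sign_to_dualS hΩo hf₀ hch hΩne hFN
      obtain ⟨σH, hσH0, hH'⟩ := sign_to_dualS hΩo hf₀ hch hΩne hHN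
      have hFζpos : 0 < (σF • F) (chartMap f₀ p) := dual_pos hCopen hF' hζC
      have hFτζpos : 0 < (σF • F) (τ (chartMap f₀ p)) := dual_pos hCopen hF' hτζC
      have hHζpos : 0 < (σH • H) (chartMap f₀ p) := dual_pos hCopen hH' hζC
      have hHτζpos : 0 < (σH • H) (τ (chartMap f₀ p)) := dual_pos hCopen hH' hτζC
      simp only [LinearMap.smul_apply, smul_eq_mul] at hFζpos hFτζpos hHζpos hHτζpos
      have hFτζ0 : F (τ (chartMap f₀ p)) ≠ 0 := by
        intro h0; rw [h0, mul_zero] at hFτζpos; exact lt_irrefl 0 hFτζpos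
      have hHζ0 : H (chartMap f₀ p) ≠ 0 := by
        intro h0; rw [h0, mul_zero] at hHζpos; exact lt_irrefl 0 hHζpos
      have hval : (F (chartMap f₀ p) * H (τ (chartMap f₀ p)))
            / (F (τ (chartMap f₀ p)) * H (chartMap f₀ p))
          = ((σF • F) (chartMap f₀ p) * (σH • H) (τ (chartMap f₀ p)))
            / ((σF • F) (τ (chartMap f₀ p)) * (σH • H) (chartMap f₀ p)) := by
        simp only [LinearMap.smul_apply, smul_eq_mul]
        rw [div_eq_div_iff (mul_ne_zero hFτζ0 hHζ0)
          (mul_ne_zero (ne_of_gt hFτζpos) (ne_of_gt hHζpos))]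
        ring
      rw [hval]
      set F' := σF • F with hF'def
      set H' := σH • H with hH'def
      -- maxima over the finite index set
      obtain ⟨i₀, hi₀, hmax1⟩ := t.exists_max_image
        (fun i => F' (chartMap f₀ (xM i)) / F' (τ (chartMap f₀ (xM i)))) htne
      obtain ⟨j₀, hj₀, hmax2⟩ := t.exists_max_image
        (fun i => H' (τ (chartMap f₀ (xM i))) / H' (chartMap f₀ (xM i))) htne
      have hv1C := hvC i₀ hi₀
      have hv2C := hvC j₀ hj₀
      have hτv1C := hτC hv1C
      have hτv2C := hτC hv2C
      have hv1Fpos : 0 < F' (chartMap f₀ (xM i₀)) := dual_pos hCopen hF' hv1C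
      have hτv1Fpos : 0 < F' (τ (chartMap f₀ (xM i₀))) := dual_pos hCopen hF' hτv1C
      have hv2Hpos : 0 < H' (chartMap f₀ (xM j₀)) := dual_pos hCopen hH' hv2C
      have hτv2Hpos : 0 < H' (τ (chartMap f₀ (xM j₀))) := dual_pos hCopen hH' hτv2C
      set Aq := F' (chartMap f₀ (xM i₀)) / F' (τ (chartMap f₀ (xM i₀))) with hAq
      set Bq := H' (τ (chartMap f₀ (xM j₀))) / H' (chartMap f₀ (xM j₀)) with hBq
      have hAqpos : 0 < Aq := by rw [hAq]; positivity
      have hBqpos : 0 < Bq := by rw [hBq]; positivity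
      -- mediant estimates
      have hF1 : F' (chartMap f₀ p) ≤ Aq * F' (τ (chartMap f₀ p)) := by
        have e1 : F' (chartMap f₀ p) = ∑ i ∈ t, wgt i * F' (chartMap f₀ (xM i)) := by
          rw [hζsum, _root_.map_sum]
          exact Finset.sum_congr rfl fun i _ => by rw [_root_.map_smul, smul_eq_mul]
        have e2 : F' (τ (chartMap f₀ p)) = ∑ i ∈ t, wgt i * F' (τ (chartMap f₀ (xM i))) := by
          rw [hτζ, _root_.map_sum]
          exact Finset.sum_congr rfl fun i _ => by rw [_root_.map_smul, smul_eq_mul]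
        rw [e1, e2, Finset.mul_sum]
        apply Finset.sum_le_sum
        intro i hi
        have hpos_i : 0 < F' (τ (chartMap f₀ (xM i))) := dual_pos hCopen hF' (hτC (hvC i hi))
        have hratio := hmax1 i hi
        rw [div_le_div_iff₀ hpos_i hτv1Fpos] at hratio
        have h9 : F' (chartMap f₀ (xM i)) ≤ Aq * F' (τ (chartMap f₀ (xM i))) := by
          rw [hAq, div_mul_eq_mul_div, le_div_iff₀ hτv1Fpos]
          nlinarith [hratio]
        calc wgt i * F' (chartMap f₀ (xM i)) ≤ wgt i * (Aq * F' (τ (chartMap f₀ (xM i)))) :=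
              mul_le_mul_of_nonneg_left h9 (hw0 i hi)
          _ = Aq * (wgt i * F' (τ (chartMap f₀ (xM i)))) := by ring
      have hH1 : H' (τ (chartMap f₀ p)) ≤ Bq * H' (chartMap f₀ p) := by
        have e1 : H' (chartMap f₀ p) = ∑ i ∈ t, wgt i * H' (chartMap f₀ (xM i)) := by
          rw [hζsum, _root_.map_sum]
          exact Finset.sum_congr rfl fun i _ => by rw [_root_.map_smul, smul_eq_mul]
        have e2 : H' (τ (chartMap f₀ p)) = ∑ i ∈ t, wgt i * H' (τ (chartMap f₀ (xM i))) := by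
          rw [hτζ, _root_.map_sum]
          exact Finset.sum_congr rfl fun i _ => by rw [_root_.map_smul, smul_eq_mul]
        rw [e1, e2, Finset.mul_sum]
        apply Finset.sum_le_sum
        intro i hi
        have hpos_i : 0 < H' (chartMap f₀ (xM i)) := dual_pos hCopen hH' (hvC i hi)
        have hratio := hmax2 i hi
        rw [div_le_div_iff₀ hpos_i hv2Hpos] at hratio
        have h9 : H' (τ (chartMap f₀ (xM i))) ≤ Bq * H' (chartMap f₀ (xM i)) := by
          rw [hBq, div_mul_eq_mul_div, le_div_iff₀ hv2Hpos]
          nlinarith [hratio]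
        calc wgt i * H' (τ (chartMap f₀ (xM i))) ≤ wgt i * (Bq * H' (chartMap f₀ (xM i))) :=
              mul_le_mul_of_nonneg_left h9 (hw0 i hi)
          _ = Bq * (wgt i * H' (chartMap f₀ (xM i))) := by ring
      have hFζpos' : 0 < F' (chartMap f₀ p) := dual_pos hCopen hF' hζC
      have hFτζpos' : 0 < F' (τ (chartMap f₀ p)) := dual_pos hCopen hF' hτζC
      have hHζpos' : 0 < H' (chartMap f₀ p) := dual_pos hCopen hH' hζC
      have hHτζpos' : 0 < H' (τ (chartMap f₀ p)) := dual_pos hCopen hH' hτζC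
      have hρAB : (F' (chartMap f₀ p) * H' (τ (chartMap f₀ p)))
          / (F' (τ (chartMap f₀ p)) * H' (chartMap f₀ p)) ≤ Aq * Bq := by
        rw [div_le_iff₀ (by positivity)]
        calc F' (chartMap f₀ p) * H' (τ (chartMap f₀ p))
            ≤ (Aq * F' (τ (chartMap f₀ p))) * (Bq * H' (chartMap f₀ p)) :=
              mul_le_mul hF1 hH1 (le_of_lt hHτζpos') (by positivity)
          _ = Aq * Bq * (F' (τ (chartMap f₀ p)) * H' (chartMap f₀ p)) := by ring
      -- mRat estimates
      have hAm : Aq ≤ mRat (coneOf f₀ Ω) (τ (chartMap f₀ (xM i₀))) (chartMap f₀ (xM i₀)) :=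
        ratio_le_mRat hCopen hτv1C _ hF'
      have hBm : Bq ≤ mRat (coneOf f₀ Ω) (chartMap f₀ (xM j₀)) (τ (chartMap f₀ (xM j₀))) :=
        ratio_le_mRat hCopen hv2C _ hH'
      have hm1p : 0 < mRat (coneOf f₀ Ω) (τ (chartMap f₀ (xM i₀))) (chartMap f₀ (xM i₀)) :=
        mRat_pos hCopen hτv1C hv1C hφ₀
      have hm2p : 0 < mRat (coneOf f₀ Ω) (chartMap f₀ (xM i₀)) (τ (chartMap f₀ (xM i₀))) :=
        mRat_pos hCopen hv1C hτv1C hφ₀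
      have hm3p : 0 < mRat (coneOf f₀ Ω) (chartMap f₀ (xM j₀)) (τ (chartMap f₀ (xM j₀))) :=
        mRat_pos hCopen hv2C hτv2C hφ₀
      have hm4p : 0 < mRat (coneOf f₀ Ω) (τ (chartMap f₀ (xM j₀))) (chartMap f₀ (xM j₀)) :=
        mRat_pos hCopen hτv2C hv2C hφ₀
      have hprod1 : mRat (coneOf f₀ Ω) (τ (chartMap f₀ (xM i₀))) (chartMap f₀ (xM i₀))
          * mRat (coneOf f₀ Ω) (chartMap f₀ (xM i₀)) (τ (chartMap f₀ (xM i₀)))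
          ≤ Real.exp (2*r) :=
        mRat_mul_le hCopen hτv1C hv1C hv1C hτv1C hφ₀ (Real.exp_pos _)
          (fun φ hφ ψ hψ => hcross_i i₀ hi₀ φ hφ ψ hψ)
      have hprod2 : mRat (coneOf f₀ Ω) (τ (chartMap f₀ (xM j₀))) (chartMap f₀ (xM j₀))
          * mRat (coneOf f₀ Ω) (chartMap f₀ (xM j₀)) (τ (chartMap f₀ (xM j₀)))
          ≤ Real.exp (2*r) :=
        mRat_mul_le hCopen hτv2C hv2C hv2C hτv2C hφ₀ (Real.exp_pos _)
          (fun φ hφ ψ hψ => hcross_i j₀ hj₀ φ hφ ψ hψ)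
      have hge : 1 ≤ mRat (coneOf f₀ Ω) (chartMap f₀ (xM i₀)) (τ (chartMap f₀ (xM i₀)))
          * mRat (coneOf f₀ Ω) (τ (chartMap f₀ (xM j₀))) (chartMap f₀ (xM j₀)) := by
        have h10 := mRat_mul_ge_one hCopen hCconv hCcone hφ₀ τ τ' hττ' hτC hτ'C
          hv1C hτv2C
        rwa [hτ'τ (chartMap f₀ (xM j₀))] at h10
      have hfinal : Aq * Bq ≤ Real.exp (2*r) * Real.exp (2*r) := by
        set m1 := mRat (coneOf f₀ Ω) (τ (chartMap f₀ (xM i₀))) (chartMap f₀ (xM i₀))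
        set m2 := mRat (coneOf f₀ Ω) (chartMap f₀ (xM i₀)) (τ (chartMap f₀ (xM i₀)))
        set m3 := mRat (coneOf f₀ Ω) (chartMap f₀ (xM j₀)) (τ (chartMap f₀ (xM j₀)))
        set m4 := mRat (coneOf f₀ Ω) (τ (chartMap f₀ (xM j₀))) (chartMap f₀ (xM j₀))
        have hm1 : m1 ≤ Real.exp (2*r) / m2 := by
          rw [le_div_iff₀ hm2p]
          exact hprod1
        have hm3 : m3 ≤ Real.exp (2*r) / m4 := by
          rw [le_div_iff₀ hm4p]
          nlinarith [hprod2]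
        calc Aq * Bq ≤ m1 * m3 :=
              mul_le_mul hAm hBm (le_of_lt hBqpos) (le_of_lt hm1p)
          _ ≤ (Real.exp (2*r) / m2) * (Real.exp (2*r) / m4) :=
              mul_le_mul hm1 hm3 (le_of_lt hm3p) (by positivity)
          _ = (Real.exp (2*r) * Real.exp (2*r)) / (m2 * m4) := div_mul_div_comm _ _ _ _
          _ ≤ Real.exp (2*r) * Real.exp (2*r) := div_le_self (by positivity) hge
      exact le_trans hρAB hfinal
    -- conclude
    have hbddP := crossSet_bddAbove hΩo hf₀ hch hpΩ hgpΩ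
    have h1le : (1:ℝ) ≤ sSup (crossSet Ω p (a j • p)) :=
      le_csSup hbddP (one_mem_crossSet hf₀ hpΩ hgpΩ)
    have hXle : Real.exp (2*r) * Real.exp (2*r) ≤ Real.exp (2 * (2^(d-1) * r)) := by
      rw [← Real.exp_add]
      apply Real.exp_le_exp.mpr
      have h2d : (4:ℝ) ≤ 2 * 2^(d-1) := by
        have h11 : (2:ℝ)^1 ≤ (2:ℝ)^(d-1) := pow_le_pow_right₀ one_le_two (by omega)
        norm_num at h11
        linarith
      nlinarith [hr, h2d]
    have hsup_le : sSup (crossSet Ω p (a j • p)) ≤ Real.exp (2 * (2^(d-1) * r)) :=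
      Real.sSup_le (fun ρ hρ => le_trans (hkey ρ hρ) hXle) (le_of_lt (Real.exp_pos _))
    show hilbertDist Ω p (a j • p) ≤ 2^(d-1) * r
    unfold hilbertDist
    have hlog : Real.log (sSup (crossSet Ω p (a j • p))) ≤ 2 * (2^(d-1) * r) := by
      calc Real.log (sSup (crossSet Ω p (a j • p)))
          ≤ Real.log (Real.exp (2 * (2^(d-1) * r))) :=
            Real.log_le_log (lt_of_lt_of_le one_pos h1le) hsup_le
        _ = 2 * (2^(d-1) * r) := Real.log_exp _
    linarith
end CCProj
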